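/- Let f : G → ZMod m be an (m,n)-generalized bent function, and let p be a prime with p ∣ m and p > 2^n. Then the function x ↦ π(f x), where π : ZMod m → ZMod (m/p) is the natural reduction map (well defined since (m/p) ∣ m), is an (m/p, n)-generalized bent function. -/

import Mathlib

/-- The primitive complex `m`-th root of unity `exp(2πi/m)`. -/
noncomputable def zetaC (m : ℕ) : ℂ := Complex.exp (2 * Real.pi * Complex.I / m)

/-- `f : (Fin n → ZMod 2) → ZMod m` is an `(m,n)`-generalized bent function if
`|∑_x ζ_m^{f x} (-1)^{y·x}|² = 2^n` for all `y`. -/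
noncomputable def IsGBF (m n : ℕ) (f : (Fin n → ZMod 2) → ZMod m) : Prop :=
  ∀ y : Fin n → ZMod 2,
    ‖(∑ x : Fin n → ZMod 2,
      zetaC m ^ (f x).val * (-1 : ℂ) ^ (∑ i : Fin n, (y i).val * (x i).val))‖ ^ 2
      = (2 : ℝ) ^ n

/- ### Auxiliary lemmas -/

section Aux

open Polynomial

private lemma complex_abs_eq_one {w : ℂ} {k : ℕ} (hk : k ≠ 0) (h : w ^ k = 1) :
    ‖w‖ = 1 := by
  have h1 : ‖w‖ ^ k = 1 := by rw [← norm_pow, h, norm_one]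
  have h2 : (0 : ℝ) ≤ ‖w‖ := norm_nonneg _
  rcases lt_trichotomy ‖w‖ 1 with hlt | heq | hgt
  · have := pow_lt_one₀ h2 hlt hk
    rw [h1] at this; exact absurd this (lt_irrefl 1)
  · exact heq
  · have := one_lt_pow₀ hgt hk
    rw [h1] at this; exact absurd this (lt_irrefl 1)

private lemma pow_mod_cycle {w : ℂ} {k : ℕ} (h : w ^ k = 1) (N : ℕ) :
    w ^ N = w ^ (N % k) := by
  conv_lhs => rw [← Nat.div_add_mod N k, pow_add, pow_mul, h, one_pow, one_mul]

private lemma conj_eq_pow {w : ℂ} {k : ℕ} (hk : k ≠ 0) (h : w ^ k = 1)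
    (habs : ‖w‖ = 1) : (starRingEnd ℂ) w = w ^ (k - 1) := by
  have hw0 : w ≠ 0 := by
    intro h0; rw [h0] at habs; simp at habs
  have h1 : w * (starRingEnd ℂ) w = 1 := by
    rw [Complex.mul_conj]
    have : Complex.normSq w = 1 := by
      have := Complex.sq_norm w
      rw [habs] at this; simpa using this.symm
    rw [this]; norm_num
  have h2 : w * w ^ (k - 1) = 1 := by
    rw [← pow_succ', Nat.sub_add_cancel (Nat.one_le_iff_ne_zero.mpr hk)]
    exact h
  exact mul_left_cancel₀ hw0 (by rw [h1, h2])

/-- Transfer vanishing of an integer polynomial between two primitive `m`-th roots of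
unity in possibly different characteristic-zero fields. -/
private lemma aeval_transfer {m : ℕ} (hm : 0 < m) {R S : Type*} [Field R] [Field S]
    [CharZero R] [CharZero S] {a : R} {b : S} (ha : IsPrimitiveRoot a m)
    (hb : IsPrimitiveRoot b m) (P : Polynomial ℤ) (hP : aeval a P = 0) :
    aeval b P = 0 := by
  have h1 : aeval a (P.map (algebraMap ℤ ℚ)) = 0 := by
    rwa [aeval_map_algebraMap]
  have h2 : minpoly ℚ a ∣ P.map (algebraMap ℤ ℚ) := minpoly.dvd ℚ a h1
  rw [← cyclotomic_eq_minpoly_rat ha hm, cyclotomic_eq_minpoly_rat hb hm] at h2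
  obtain ⟨c, hc⟩ := h2
  rw [← aeval_map_algebraMap ℚ b P, hc, map_mul, minpoly.aeval, zero_mul]

/-- The core algebraic lemma: if a sum of fewer than `p` powers of `ζ_m` vanishes,
then so does the sum where all exponents are multiplied by the prime `p`. -/
private lemma gbf_core {ι : Type*} [Fintype ι] {m p : ℕ} (hm : 0 < m) (hp : p.Prime)
    (hcard : Fintype.card ι < p) (e : ι → ℕ)
    (h0 : ∑ i, zetaC m ^ e i = 0) : ∑ i, zetaC m ^ (p * e i) = 0 := by
  classical
  haveI : Fact p.Prime := ⟨hp⟩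
  have hprim : IsPrimitiveRoot (zetaC m) m := Complex.isPrimitiveRoot_exp m hm.ne'
  set mp : ℕ+ := ⟨m, hm⟩ with hmpdef
  set K := CyclotomicField mp ℚ with hKdef
  haveI : NeZero ((mp : ℕ) : ℚ) := ⟨by exact_mod_cast hm.ne'⟩
  haveI : NeZero (mp : ℕ) := ⟨mp.ne_zero⟩
  haveI : IsCyclotomicExtension {(mp : ℕ)} ℚ K :=
    CyclotomicField.isCyclotomicExtension (mp : ℕ) ℚ
  haveI : FiniteDimensional ℚ K := IsCyclotomicExtension.finiteDimensional {(mp : ℕ)} ℚ K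
  set ζK : K := IsCyclotomicExtension.zeta mp ℚ K with hζKdef
  have hprimK : IsPrimitiveRoot ζK m := IsCyclotomicExtension.zeta_spec mp ℚ K
  set A : Polynomial ℤ := ∑ i : ι, X ^ e i with hAdef
  have hAeval : ∀ {S : Type} [CommRing S] (w : S), aeval w A = ∑ i, w ^ e i := by
    intro S _ w
    simp [hAdef]
  have hAζ : aeval (zetaC m) A = 0 := by rw [hAeval]; exact h0
  have hAζK : aeval ζK A = 0 := aeval_transfer hm hprim hprimK A hAζ
  set B : Polynomial ℤ := expand ℤ p A with hBdef
  have hBeval : ∀ {S : Type} [CommRing S] (w : S), aeval w B = ∑ i, w ^ (p * e i) := by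
    intro S _ w
    rw [hBdef, expand_aeval, hAeval]
    exact Finset.sum_congr rfl fun i _ => by rw [pow_mul]
  set Cp : Polynomial ℤ := A ^ p - B with hCpdef
  have hmap : Cp.map (Int.castRingHom (ZMod p)) = 0 := by
    rw [hCpdef, hBdef, Polynomial.map_sub, Polynomial.map_pow, map_expand,
      ZMod.expand_card, sub_self]
  have hdvd : ∀ k, (p : ℤ) ∣ Cp.coeff k := by
    intro k
    have h2 : ((Cp.coeff k : ℤ) : ZMod p) = 0 := by
      have := congrArg (fun q : Polynomial (ZMod p) => q.coeff k) hmap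
      simpa [coeff_map] using this
    exact (ZMod.intCast_zmod_eq_zero_iff_dvd _ p).mp h2
  set D : Polynomial ℤ := ∑ k ∈ Cp.support, Polynomial.C (Cp.coeff k / p) * X ^ k with hDdef
  have hpD : Polynomial.C (p : ℤ) * D = Cp := by
    ext k
    rw [coeff_C_mul, hDdef, finset_sum_coeff]
    simp only [coeff_C_mul, coeff_X_pow, mul_ite, mul_one, mul_zero]
    rw [Finset.sum_ite_eq Cp.support k fun j => Cp.coeff j / p]
    by_cases hk : k ∈ Cp.support
    · rw [if_pos hk]
      exact Int.mul_ediv_cancel' (hdvd k)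
    · rw [if_neg hk]
      rw [Polynomial.notMem_support_iff] at hk
      rw [hk, mul_zero]
  have hCpK : aeval ζK Cp = (p : K) * aeval ζK D := by
    rw [← hpD, map_mul, aeval_C]
    push_cast
    ring
  have h3 : aeval ζK Cp = - aeval ζK B := by
    rw [hCpdef, map_sub, map_pow, hAζK, zero_pow hp.ne_zero, zero_sub]
  have hSK : aeval ζK B = -((p : K) * aeval ζK D) := by
    rw [← hCpK]; linear_combination h3
  have hζKint : IsIntegral ℤ ζK := hprimK.isIntegral hm
  have hδint : IsIntegral ℤ (aeval ζK D) := by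
    have hmem : aeval ζK D ∈ Algebra.adjoin ℤ ({ζK} : Set K) := by
      rw [Algebra.adjoin_singleton_eq_range_aeval]
      exact ⟨D, rfl⟩
    have hle : Algebra.adjoin ℤ ({ζK} : Set K) ≤ integralClosure ℤ K :=
      Algebra.adjoin_le (Set.singleton_subset_iff.mpr hζKint)
    exact hle hmem
  have hnormint : IsIntegral ℤ (Algebra.norm ℚ (aeval ζK D)) :=
    Algebra.isIntegral_norm ℚ hδint
  obtain ⟨z, hz⟩ := IsIntegrallyClosed.isIntegral_iff.mp hnormint
  have hple : (0 : ℝ) < p := by exact_mod_cast hp.pos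
  have hbound : ∀ σ : K →ₐ[ℚ] ℂ,
      ‖σ (aeval ζK D)‖ ≤ (Fintype.card ι : ℝ) / p := by
    intro σ
    have hσB : σ (aeval ζK B) = ∑ i, (σ ζK) ^ (p * e i) := by
      have h := Polynomial.aeval_algHom_apply (σ.restrictScalars ℤ) ζK B
      exact h.symm.trans (hBeval _)
    have hσζ : (σ ζK) ^ m = 1 := by
      rw [← map_pow, hprimK.pow_eq_one, map_one]
    have habs1 : ‖σ ζK‖ = 1 := complex_abs_eq_one hm.ne' hσζ
    have h5 : ‖σ (aeval ζK B)‖ ≤ (Fintype.card ι : ℝ) := by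
      rw [hσB]
      calc ‖∑ i, (σ ζK) ^ (p * e i)‖
          ≤ ∑ i : ι, ‖(σ ζK) ^ (p * e i)‖ := norm_sum_le _ _
        _ = ∑ _i : ι, (1 : ℝ) := by
            exact Finset.sum_congr rfl fun i _ => by rw [norm_pow, habs1, one_pow]
        _ = (Fintype.card ι : ℝ) := by
            rw [Finset.sum_const, Finset.card_univ, nsmul_eq_mul, mul_one]
    have h6 : σ (aeval ζK B) = -((p : ℂ) * σ (aeval ζK D)) := by
      rw [hSK, map_neg, map_mul, map_natCast]
    rw [h6] at h5
    rw [norm_neg, norm_mul, Complex.norm_natCast] at h5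
    rw [le_div_iff₀ hple]
    linarith [h5]
  have hnormabs :
      ‖(algebraMap ℚ ℂ) (Algebra.norm ℚ (aeval ζK D))‖ < 1 := by
    rw [Algebra.norm_eq_prod_embeddings, norm_prod]
    have hcard2 : Fintype.card (K →ₐ[ℚ] ℂ) = Module.finrank ℚ K := AlgHom.card ℚ K ℂ
    have hfinpos : 0 < Module.finrank ℚ K := Module.finrank_pos
    calc ∏ σ : K →ₐ[ℚ] ℂ, ‖σ (aeval ζK D)‖
        ≤ ∏ _σ : K →ₐ[ℚ] ℂ, ((Fintype.card ι : ℝ) / p) :=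
          Finset.prod_le_prod (fun _ _ => norm_nonneg _)
            (fun σ _ => hbound σ)
      _ = ((Fintype.card ι : ℝ) / p) ^ (Fintype.card (K →ₐ[ℚ] ℂ)) := by
          rw [Finset.prod_const, Finset.card_univ]
      _ < 1 := by
          apply pow_lt_one₀ (by positivity) _ (by rw [hcard2]; exact hfinpos.ne')
          rw [div_lt_one hple]
          exact_mod_cast hcard
  have hzc : ((z : ℚ) : ℂ) = (algebraMap ℚ ℂ) (Algebra.norm ℚ (aeval ζK D)) := by
    rw [← hz]; push_cast; rfl
  have hz0 : z = 0 := by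
    have h7 : ‖(z : ℂ)‖ < 1 := by
      have : ((z : ℚ) : ℂ) = ((z : ℂ)) := by push_cast; rfl
      rw [← this, hzc]; exact hnormabs
    rw [Complex.norm_intCast] at h7
    have h8 : |z| < 1 := by exact_mod_cast h7
    rcases abs_lt.mp h8 with ⟨h9, h10⟩
    omega
  have hnorm0 : Algebra.norm ℚ (aeval ζK D) = 0 := by
    rw [← hz, hz0]; simp
  have hδ0 : aeval ζK D = 0 := by
    exact (Algebra.norm_eq_zero_iff).mp hnorm0
  have hBK0 : aeval ζK B = 0 := by rw [hSK, hδ0, mul_zero, neg_zero]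
  have hBζ : aeval (zetaC m) B = 0 := aeval_transfer hm hprimK hprim B hBK0
  rw [hBeval] at hBζ
  exact hBζ

end Aux

/- ### Characters of (ZMod 2)^n -/

section Chi

variable {n : ℕ}

private noncomputable def chi (y x : Fin n → ZMod 2) : ℂ :=
  (-1 : ℂ) ^ (∑ i, (y i).val * (x i).val)

private lemma neg_one_pow_mod (a : ℕ) : (-1 : ℂ) ^ a = (-1) ^ (a % 2) := by
  conv_lhs => rw [← Nat.div_add_mod a 2]
  rw [pow_add, pow_mul]
  norm_num

private lemma neg_one_pow_congr' {a b : ℕ} (h : a % 2 = b % 2) :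
    (-1 : ℂ) ^ a = (-1) ^ b := by
  rw [neg_one_pow_mod a, neg_one_pow_mod b, h]

private lemma nat_mul_mod_two (a w : ℕ) : (a * (w % 2)) % 2 = (a * w) % 2 := by
  conv_lhs => rw [Nat.mul_mod]
  conv_rhs => rw [Nat.mul_mod]
  rw [Nat.mod_mod_of_dvd w (dvd_refl 2)]

private lemma chi_mul (y x x' : Fin n → ZMod 2) :
    chi y x * chi y x' = chi y (x + x') := by
  unfold chi
  rw [← pow_add]
  apply neg_one_pow_congr'
  rw [← Finset.sum_add_distrib]
  conv_lhs => rw [Finset.sum_nat_mod]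
  conv_rhs => rw [Finset.sum_nat_mod]
  congr 1
  apply Finset.sum_congr rfl
  intro i _
  rw [Pi.add_apply, ZMod.val_add, nat_mul_mod_two, Nat.left_distrib]

private lemma chi_zero (y : Fin n → ZMod 2) : chi y 0 = 1 := by
  unfold chi
  simp

private lemma chi_conj (y x : Fin n → ZMod 2) :
    (starRingEnd ℂ) (chi y x) = chi y x := by
  unfold chi
  rw [map_pow, map_neg, map_one]

private lemma zmod2_cases (a : ZMod 2) : a = 0 ∨ a = 1 := by revert a; decide

private lemma pi_add_self (x : Fin n → ZMod 2) : x + x = 0 := by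
  funext i
  rw [Pi.add_apply]
  have : ∀ a : ZMod 2, a + a = 0 := by decide
  exact this _

private lemma chi_sum_eq (w : Fin n → ZMod 2) :
    ∑ y : Fin n → ZMod 2, chi y w = if w = 0 then (2 : ℂ) ^ n else 0 := by
  classical
  have h1 : ∀ y : Fin n → ZMod 2,
      chi y w = ∏ i, (-1 : ℂ) ^ ((y i).val * (w i).val) := by
    intro y
    unfold chi
    rw [Finset.prod_pow_eq_pow_sum]
  simp_rw [h1]
  rw [← Fintype.piFinset_univ]
  have h3 := Finset.prod_univ_sum (fun _ : Fin n => (Finset.univ : Finset (ZMod 2)))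
    (fun i a => (-1 : ℂ) ^ ((a : ZMod 2).val * (w i).val))
  rw [← h3]
  have h2 : ∀ i, ∑ a : ZMod 2, (-1 : ℂ) ^ ((a : ZMod 2).val * (w i).val)
      = 1 + (-1 : ℂ) ^ ((w i).val) := by
    intro i
    have huniv : (Finset.univ : Finset (ZMod 2)) = {0, 1} := by decide
    rw [huniv, Finset.sum_pair (by decide : (0 : ZMod 2) ≠ 1)]
    have hv0 : (0 : ZMod 2).val = 0 := rfl
    have hv1 : (1 : ZMod 2).val = 1 := rfl
    rw [hv0, hv1, zero_mul, one_mul, pow_zero]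
  by_cases hw : w = 0
  · subst hw
    rw [if_pos rfl]
    have : ∀ i : Fin n, ∑ a : ZMod 2, (-1 : ℂ) ^ ((a : ZMod 2).val * ((0 : Fin n → ZMod 2) i).val) = 2 := by
      intro i
      rw [h2]
      norm_num
    rw [Finset.prod_congr rfl fun i _ => this i, Finset.prod_const, Finset.card_univ,
      Fintype.card_fin]
  · rw [if_neg hw]
    have hex : ∃ i, w i ≠ 0 := by
      by_contra hcon
      push_neg at hcon
      exact hw (funext hcon)
    obtain ⟨i0, hi0⟩ := hex
    apply Finset.prod_eq_zero (Finset.mem_univ i0)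
    have hw1 : w i0 = 1 := (zmod2_cases (w i0)).resolve_left hi0
    rw [h2, hw1]
    have hv1 : (1 : ZMod 2).val = 1 := rfl
    rw [hv1]
    norm_num

private lemma expand_SconjS (g : (Fin n → ZMod 2) → ℂ) (y : Fin n → ZMod 2) :
    (∑ x, g x * chi y x) * (starRingEnd ℂ) (∑ x, g x * chi y x)
      = ∑ w, (∑ x, g x * (starRingEnd ℂ) (g (x + w))) * chi y w := by
  classical
  rw [map_sum, Finset.sum_mul_sum]
  have hterm : ∀ x x' : Fin n → ZMod 2,
      (g x * chi y x) * (starRingEnd ℂ) (g x' * chi y x')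
        = g x * (starRingEnd ℂ) (g x') * chi y (x + x') := by
    intro x x'
    rw [map_mul, chi_conj, ← chi_mul]
    ring
  simp_rw [hterm]
  have hre : ∀ x : Fin n → ZMod 2,
      ∑ x', g x * (starRingEnd ℂ) (g x') * chi y (x + x')
        = ∑ w, g x * (starRingEnd ℂ) (g (x + w)) * chi y w := by
    intro x
    refine (Fintype.sum_equiv (Equiv.addLeft x)
      (fun w => g x * (starRingEnd ℂ) (g (x + w)) * chi y w)
      (fun x' => g x * (starRingEnd ℂ) (g x') * chi y (x + x')) ?_).symm
    intro w
    have hxxw : x + (x + w) = w := by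
      rw [← add_assoc, pi_add_self, zero_add]
    simp only [Equiv.coe_addLeft]
    rw [hxxw]
  simp_rw [hre]
  rw [Finset.sum_comm]
  apply Finset.sum_congr rfl
  intro w _
  rw [← Finset.sum_mul]

private lemma autocorr_eq_zero (g : (Fin n → ZMod 2) → ℂ)
    (hb : ∀ y, (∑ x, g x * chi y x) * (starRingEnd ℂ) (∑ x, g x * chi y x) = (2 : ℂ) ^ n)
    {z : Fin n → ZMod 2} (hz : z ≠ 0) :
    ∑ x, g x * (starRingEnd ℂ) (g (x + z)) = 0 := by
  classical
  set A : (Fin n → ZMod 2) → ℂ := fun w => ∑ x, g x * (starRingEnd ℂ) (g (x + w)) with hAdef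
  have h1 : ∑ y : Fin n → ZMod 2,
      ((∑ x, g x * chi y x) * (starRingEnd ℂ) (∑ x, g x * chi y x)) * chi y z
      = (2 : ℂ) ^ n * ∑ y : Fin n → ZMod 2, chi y z := by
    rw [Finset.mul_sum]
    exact Finset.sum_congr rfl fun y _ => by rw [hb y]
  have h2 : ∑ y : Fin n → ZMod 2,
      ((∑ x, g x * chi y x) * (starRingEnd ℂ) (∑ x, g x * chi y x)) * chi y z
      = ∑ y : Fin n → ZMod 2, ∑ w, A w * chi y (w + z) := by
    apply Finset.sum_congr rfl
    intro y _
    rw [expand_SconjS, Finset.sum_mul]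
    apply Finset.sum_congr rfl
    intro w _
    rw [mul_assoc, chi_mul]
  have h3 : ∑ y : Fin n → ZMod 2, ∑ w, A w * chi y (w + z) = A z * (2 : ℂ) ^ n := by
    rw [Finset.sum_comm]
    have h4 : ∀ w : Fin n → ZMod 2,
        ∑ y : Fin n → ZMod 2, A w * chi y (w + z)
          = A w * (if w + z = 0 then (2 : ℂ) ^ n else 0) := by
      intro w
      rw [← Finset.mul_sum, chi_sum_eq]
    rw [Finset.sum_congr rfl fun w _ => h4 w]
    have hcond : ∀ w : Fin n → ZMod 2, (w + z = 0) ↔ (w = z) := by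
      intro w
      constructor
      · intro h
        have := congrArg (· + z) h
        simpa [add_assoc, pi_add_self] using this
      · intro h
        rw [h, pi_add_self]
    have : ∀ w : Fin n → ZMod 2,
        A w * (if w + z = 0 then (2 : ℂ) ^ n else 0)
          = if w = z then A w * (2 : ℂ) ^ n else 0 := by
      intro w
      by_cases hc : w = z
      · rw [if_pos ((hcond w).mpr hc), if_pos hc]
      · rw [if_neg (fun hcc => hc ((hcond w).mp hcc)), if_neg hc, mul_zero]
    rw [Finset.sum_congr rfl fun w _ => this w]
    rw [Finset.sum_ite_eq' Finset.univ z (fun w => A w * (2 : ℂ) ^ n)]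
    rw [if_pos (Finset.mem_univ z)]
  have h5 : (2 : ℂ) ^ n * ∑ y : Fin n → ZMod 2, chi y z = 0 := by
    rw [chi_sum_eq, if_neg hz, mul_zero]
  have h6 : A z * (2 : ℂ) ^ n = 0 := by rw [← h3, ← h2, h1, h5]
  have h7 : (2 : ℂ) ^ n ≠ 0 := pow_ne_zero n two_ne_zero
  exact (mul_eq_zero.mp h6).resolve_right h7

private lemma key_forward (g : (Fin n → ZMod 2) → ℂ)
    (huni : ∀ x, g x * (starRingEnd ℂ) (g x) = 1)
    (hA : ∀ z : Fin n → ZMod 2, z ≠ 0 → ∑ x, g x * (starRingEnd ℂ) (g (x + z)) = 0)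
    (y : Fin n → ZMod 2) :
    (∑ x, g x * chi y x) * (starRingEnd ℂ) (∑ x, g x * chi y x) = (2 : ℂ) ^ n := by
  classical
  rw [expand_SconjS]
  rw [Finset.sum_eq_single (0 : Fin n → ZMod 2)]
  · have hterm : ∀ x : Fin n → ZMod 2, g x * (starRingEnd ℂ) (g (x + 0)) = 1 := by
      intro x
      rw [add_zero]
      exact huni x
    rw [Finset.sum_congr rfl fun x _ => hterm x, chi_zero, mul_one, Finset.sum_const,
      Finset.card_univ, nsmul_eq_mul, mul_one]
    have : Fintype.card (Fin n → ZMod 2) = 2 ^ n := by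
      rw [Fintype.card_fun, ZMod.card, Fintype.card_fin]
    rw [this]
    push_cast
    ring
  · intro w _ hw
    rw [hA w hw, zero_mul]
  · intro hmem
    exact absurd (Finset.mem_univ _) hmem

end Chi

theorem stmt_3 (m n : ℕ) (hm : 2 ≤ m) (hn : 1 ≤ n) (p : ℕ) (hp : p.Prime)
    (hpm : p ∣ m) (hpn : 2 ^ n < p)
    (f : (Fin n → ZMod 2) → ZMod m) (hf : IsGBF m n f) :
    IsGBF (m / p) n
      (fun x => ZMod.castHom (Nat.div_dvd_of_dvd hpm) (ZMod (m / p)) (f x)) := by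
  classical
  intro y
  have hm0 : m ≠ 0 := by omega
  haveI : NeZero m := ⟨hm0⟩
  set q := m / p with hqdef
  have hmq : m = p * q := (Nat.mul_div_cancel' hpm).symm
  have hq0 : q ≠ 0 := by
    intro h
    rw [h, mul_zero] at hmq
    exact hm0 hmq
  haveI : NeZero q := ⟨hq0⟩
  have hprim : IsPrimitiveRoot (zetaC m) m := Complex.isPrimitiveRoot_exp m hm0
  have hprimq : IsPrimitiveRoot (zetaC q) q := Complex.isPrimitiveRoot_exp q hq0
  have hζm1 : zetaC m ^ m = 1 := hprim.pow_eq_one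
  have hξq1 : zetaC q ^ q = 1 := hprimq.pow_eq_one
  have habsm : ‖zetaC m‖ = 1 := complex_abs_eq_one hm0 hζm1
  have habsq : ‖zetaC q‖ = 1 := complex_abs_eq_one hq0 hξq1
  have hconjm : (starRingEnd ℂ) (zetaC m) = zetaC m ^ (m - 1) :=
    conj_eq_pow hm0 hζm1 habsm
  have hconjq : (starRingEnd ℂ) (zetaC q) = zetaC q ^ (q - 1) :=
    conj_eq_pow hq0 hξq1 habsq
  have hζp : zetaC m ^ p = zetaC q := by
    unfold zetaC
    rw [← Complex.exp_nat_mul]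
    congr 1
    have hmc : (m : ℂ) = (p : ℂ) * (q : ℂ) := by
      rw [hmq]; push_cast; ring
    have hpc : (p : ℂ) ≠ 0 := by exact_mod_cast hp.ne_zero
    have hqc : (q : ℂ) ≠ 0 := by exact_mod_cast hq0
    field_simp [hmc]
    linear_combination hmc.symm
  -- value of the reduced function
  have hvalcast : ∀ u : ZMod m,
      (ZMod.castHom (Nat.div_dvd_of_dvd hpm) (ZMod q) u).val = u.val % q := by
    intro u
    rw [ZMod.castHom_apply, ← ZMod.natCast_val u, ZMod.val_natCast]
  -- bentness of h in product form
  set h : (Fin n → ZMod 2) → ℂ := fun x => zetaC m ^ (f x).val with hhdef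
  have hbenth : ∀ y' : Fin n → ZMod 2,
      (∑ x, h x * chi y' x) * (starRingEnd ℂ) (∑ x, h x * chi y' x) = (2 : ℂ) ^ n := by
    intro y'
    have hf' := hf y'
    rw [Complex.mul_conj]
    have : Complex.normSq (∑ x, h x * chi y' x) = (2 : ℝ) ^ n := by
      rw [← Complex.sq_norm]
      exact hf'
    rw [this]
    push_cast
    ring
  have hauto : ∀ z : Fin n → ZMod 2, z ≠ 0 →
      ∑ x, h x * (starRingEnd ℂ) (h (x + z)) = 0 :=
    fun z hz => autocorr_eq_zero h hbenth hz
  have hcardG : Fintype.card (Fin n → ZMod 2) = 2 ^ n := by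
    rw [Fintype.card_fun, ZMod.card, Fintype.card_fin]
  -- the reduced function
  set g : (Fin n → ZMod 2) → ℂ := fun x =>
    zetaC q ^ ((ZMod.castHom (Nat.div_dvd_of_dvd hpm) (ZMod q) (f x)).val) with hgdef
  -- autocorrelation of g vanishes
  have hAg : ∀ z : Fin n → ZMod 2, z ≠ 0 →
      ∑ x, g x * (starRingEnd ℂ) (g (x + z)) = 0 := by
    intro z hz
    have he : ∑ x : Fin n → ZMod 2,
        zetaC m ^ ((f x).val + (m - 1) * (f (x + z)).val) = 0 := by
      rw [← hauto z hz]
      apply Finset.sum_congr rfl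
      intro x _
      rw [hhdef]
      simp only
      rw [pow_add, pow_mul, ← hconjm, ← map_pow]
    have hcore := gbf_core (Nat.pos_of_ne_zero hm0) hp
      (by rw [hcardG]; exact hpn) _ he
    have hterm : ∀ x : Fin n → ZMod 2,
        g x * (starRingEnd ℂ) (g (x + z))
          = zetaC m ^ (p * ((f x).val + (m - 1) * (f (x + z)).val)) := by
      intro x
      have h1 : g x = zetaC q ^ ((f x).val % q) := by
        rw [hgdef]
        simp only
        rw [hvalcast]
      have h2 : (starRingEnd ℂ) (g (x + z))
          = (zetaC q ^ (q - 1)) ^ ((f (x + z)).val % q) := by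
        rw [hgdef]
        simp only
        rw [hvalcast, map_pow, hconjq]
      rw [h1, h2, ← pow_mul, ← pow_add, pow_mul, hζp]
      rw [pow_mod_cycle hξq1 ((f x).val % q + (q - 1) * ((f (x + z)).val % q)),
        pow_mod_cycle hξq1 ((f x).val + (m - 1) * (f (x + z)).val)]
      congr 1
      have hq1 : 1 ≤ q := Nat.one_le_iff_ne_zero.mpr hq0
      have hp1 : 1 ≤ p := hp.pos
      have hsub : (p - 1) * q = m - q := by
        rw [Nat.sub_mul, one_mul, ← hmq]
      have hm1 : m - 1 = (q - 1) + (p - 1) * q := by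
        rw [hsub]
        have hqm : q ≤ m := by
          rw [hmq]
          exact Nat.le_mul_of_pos_left q hp.pos
        omega
      have hqm1 : Nat.ModEq q (q - 1) (m - 1) := by
        unfold Nat.ModEq
        rw [hm1, Nat.add_mul_mod_self_right]
      exact Nat.ModEq.add (Nat.mod_modEq _ q)
        (((Nat.mod_modEq _ q).mul_left (q - 1)).trans (hqm1.mul_right _))
    rw [Finset.sum_congr rfl fun x _ => hterm x]
    exact hcore
  -- unimodularity of g
  have hguni : ∀ x, g x * (starRingEnd ℂ) (g x) = 1 := by
    intro x
    rw [Complex.mul_conj]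
    have : Complex.normSq (g x) = 1 := by
      rw [← Complex.sq_norm, hgdef]
      simp only
      rw [norm_pow, habsq, one_pow, one_pow]
    rw [this]
    norm_num
  have hkey := key_forward g hguni hAg y
  show ‖∑ x, g x * chi y x‖ ^ 2 = (2 : ℝ) ^ n
  rw [Complex.sq_norm]
  have hcast : (Complex.normSq (∑ x, g x * chi y x) : ℂ) = ((2 : ℝ) ^ n : ℂ) := by
    rw [← Complex.mul_conj, hkey]
    push_cast
    ring
  exact_mod_cast hcast
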